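/- Let c : ℕ → ℕ. Two vertices (n_0,k_0,x_0) and (n_1,k_1,x_1) of X_c are in the same connected component of 𝕃_c if and only if there are finite binary strings t_0, t_1 and x ∈ 2^ℕ such that |t_0| − |t_1| = n_1 − n_0 and x_i = t_i^⌢x for both i < 2. -/

import Mathlib

open MeasureTheory

/-- A walk of length `m` in the graph given by the relation `Adj`. -/
def IsWalk {α : Type*} (Adj : α → α → Prop) (m : ℕ) (w : ℕ → α) : Prop :=
  ∀ j, j < m → Adj (w j) (w (j + 1))

/-- The set of lengths of walks from `u` to `v`. -/
def walkLens {α : Type*} (Adj : α → α → Prop) (u v : α) : Set ℕ :=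
  {m | ∃ w : ℕ → α, w 0 = u ∧ w m = v ∧ IsWalk Adj m w}

/-- `Φ(A,k)`: every odd-length walk in `G` with both endpoints in `A`
has length at most `2k - 1`. -/
def PhiProp {X : Type*} (G : X → X → Prop) (A : Set X) (k : ℕ) : Prop :=
  ∀ (m : ℕ) (w : ℕ → X), Odd m → IsWalk G m w → w 0 ∈ A → w m ∈ A → m ≤ 2 * k - 1

/-- The endpoint `e_i^n = (p_0)^⌢(0)^{n-1}⌢(i)` of the finite path `L^c_n`
(vertices of `L^c_n` are coded as lists of naturals, the head being the
index `k` of `p_k` and the tail being a binary string). -/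
def pathEnd : ℕ → ℕ → List ℕ
  | 0, _ => [0]
  | m + 1, i => 0 :: (List.replicate m 0 ++ [i])

/-- The vertex set of the finite path `L^c_n`. -/
def LVerts (c : ℕ → ℕ) : ℕ → Set (List ℕ)
  | 0 => {[0]}
  | n + 1 =>
      ((fun v => v ++ [0]) '' LVerts c n) ∪ ((fun v => v ++ [1]) '' LVerts c n) ∪
        {v | ∃ k ≤ c n, v = [k]}

/-- The edge set of the finite path `L^c_n` (as a set of ordered pairs,
one orientation for each edge): `L^c_{n+1}` consists of two relabelled copies
of `L^c_n` joined by the path `(e_1^n)^⌢(0), p_0, …, p_{c(n)}, (e_1^n)^⌢(1)`. -/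
def LEdges (c : ℕ → ℕ) : ℕ → Set (List ℕ × List ℕ)
  | 0 => ∅
  | n + 1 =>
      {e | ∃ u v, (u, v) ∈ LEdges c n ∧ ∃ i ≤ 1, e = (u ++ [i], v ++ [i])} ∪
      {(pathEnd n 1 ++ [0], [0]), ([c n], pathEnd n 1 ++ [1])} ∪
      {e | ∃ j, j < c n ∧ e = ([j], [j + 1])}

/-- The (symmetric) adjacency relation of `L^c_n`. -/
def LAdj (c : ℕ → ℕ) (n : ℕ) (u v : List ℕ) : Prop :=
  (u, v) ∈ LEdges c n ∨ (v, u) ∈ LEdges c n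

/-- The Polish space `X_c ⊆ ℕ × ℕ × 2^ℕ` of vertices of `𝕃_c`. -/
def Xc (c : ℕ → ℕ) : Set (ℕ × ℕ × (ℕ → Bool)) :=
  {p | (p.1 = 0 ∧ p.2.1 = 0) ∨ (1 ≤ p.1 ∧ p.2.1 ≤ c (p.1 - 1))}

/-- `π_n(m,k,x) = (p_k)^⌢(x↾(n-m))`, a vertex of `L^c_n` (for `n ≥ m`). -/
def piProj (m k : ℕ) (x : ℕ → Bool) (n : ℕ) : List ℕ :=
  k :: List.ofFn (fun j : Fin (n - m) => cond (x j.val) 1 0)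

/-- Adjacency in `𝕃_c`: the projections are adjacent in `L^c_n` for every
`n ≥ max` of the first coordinates. -/
def LcAdj (c : ℕ → ℕ) (p q : ℕ × ℕ × (ℕ → Bool)) : Prop :=
  ∀ n, max p.1 q.1 ≤ n → LAdj c n (piProj p.1 p.2.1 p.2.2 n) (piProj q.1 q.2.1 q.2.2 n)

/-- Concatenation `t^⌢x` of a finite binary string with an infinite one. -/
def catSeq (t : List Bool) (x : ℕ → Bool) : ℕ → Bool :=
  fun j => if h : j < t.length then t.get ⟨j, h⟩ else x (j - t.length)


namespace Stmt13
variable {c : ℕ → ℕ}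

lemma catSeq_lt {t : List Bool} {x : ℕ → Bool} {j : ℕ} (h : j < t.length) :
    catSeq t x j = t.get ⟨j, h⟩ := dif_pos h

lemma catSeq_ge {t : List Bool} {x : ℕ → Bool} {j : ℕ} (h : t.length ≤ j) :
    catSeq t x j = x (j - t.length) := dif_neg (by omega)

lemma catSeq_nil (x : ℕ → Bool) : catSeq [] x = x := funext fun j => by simp [catSeq]

lemma piProj_len (m k : ℕ) (x : ℕ → Bool) (n : ℕ) :
    (piProj m k x n).length = n - m + 1 := by simp [piProj]

lemma projStep {m n : ℕ} (h : m ≤ n) (k : ℕ) (x : ℕ → Bool) :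
    piProj m k x (n + 1) = piProj m k x n ++ [cond (x (n - m)) 1 0] := by
  have h1 : n + 1 - m = (n - m) + 1 := by omega
  unfold piProj
  rw [h1, List.ofFn_succ']
  simp [List.concat_eq_append]

lemma proj_eq_of_agree {m k n : ℕ} {y y' : ℕ → Bool}
    (h : ∀ j, j < n - m → y j = y' j) : piProj m k y n = piProj m k y' n := by
  unfold piProj
  congr 1
  exact congrArg _ (funext fun j => by rw [h j.val j.isLt])


lemma liftEdge {n : ℕ} {u v : List ℕ} (h : (u, v) ∈ LEdges c n) {i : ℕ} (hi : i ≤ 1) :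
    (u ++ [i], v ++ [i]) ∈ LEdges c (n + 1) := by
  show _ ∈ _ ∪ _ ∪ _
  exact Or.inl (Or.inl ⟨u, v, h, i, hi, rfl⟩)

lemma liftAdj {n : ℕ} {u v : List ℕ} (h : LAdj c n u v) {i : ℕ} (hi : i ≤ 1) :
    LAdj c (n + 1) (u ++ [i]) (v ++ [i]) :=
  h.imp (fun h => liftEdge h hi) (fun h => liftEdge h hi)

lemma piProj_self (m k : ℕ) (x : ℕ → Bool) : piProj m k x m = [k] := by
  simp [piProj]

lemma mkLcAdj {p q : ℕ × ℕ × (ℕ → Bool)}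
    (hbase : LAdj c (max p.1 q.1) (piProj p.1 p.2.1 p.2.2 (max p.1 q.1))
      (piProj q.1 q.2.1 q.2.2 (max p.1 q.1)))
    (htail : ∀ j, p.2.2 (max p.1 q.1 - p.1 + j) = q.2.2 (max p.1 q.1 - q.1 + j)) :
    LcAdj c p q := by
  intro n hn
  set N := max p.1 q.1 with hN
  obtain ⟨d, rfl⟩ : ∃ d, n = N + d := ⟨n - N, by omega⟩
  clear hn
  induction d with
  | zero => exact hbase
  | succ d ih =>
    have hp : p.1 ≤ N + d := le_trans (le_max_left _ _) (Nat.le_add_right _ _)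
    have hq : q.1 ≤ N + d := le_trans (le_max_right _ _) (Nat.le_add_right _ _)
    have hb : p.2.2 (N + d - p.1) = q.2.2 (N + d - q.1) := by
      have h := htail d
      rw [show N - p.1 + d = N + d - p.1 by omega, show N - q.1 + d = N + d - q.1 by omega] at h
      exact h
    rw [show N + (d + 1) = (N + d) + 1 by ring, projStep hp, projStep hq, hb]
    exact liftAdj ih (by cases q.2.2 (N + d - q.1) <;> simp)

lemma adjA {m k : ℕ} (hk : k < c m) (x : ℕ → Bool) :
    LcAdj c (m + 1, k, x) (m + 1, k + 1, x) := by
  apply mkLcAdj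
  · show LAdj c (max (m+1) (m+1)) _ _
    rw [max_self, piProj_self, piProj_self]
    left
    show _ ∈ _ ∪ _ ∪ _
    exact Or.inr ⟨k, hk, rfl⟩
  · intro j
    simp


def sig : ℕ → Bool → List Bool
  | 0, i => [i]
  | a + 1, i => List.replicate a false ++ [true, i]

lemma sig_len (a : ℕ) (i : Bool) : (sig a i).length = a + 1 := by
  cases a <;> simp [sig]

lemma proj_catSeq (t : List Bool) (x : ℕ → Bool) :
    piProj 0 0 (catSeq t x) t.length = 0 :: t.map (fun b => cond b 1 0) := by
  induction t using List.reverseRecOn with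
  | nil => simp [piProj]
  | append_singleton s b ih =>
    have h1 : (s ++ [b]).length = s.length + 1 := by simp
    rw [h1, projStep (Nat.zero_le _)]
    have h2 : piProj 0 0 (catSeq (s ++ [b]) x) s.length = piProj 0 0 (catSeq s x) s.length := by
      apply proj_eq_of_agree
      intro j hj
      simp only [Nat.sub_zero] at hj
      rw [catSeq_lt (by simp; omega), catSeq_lt (by omega)]
      simp only [List.get_eq_getElem]
      exact List.getElem_append_left (by omega)
    have h3 : catSeq (s ++ [b]) x (s.length - 0) = b := by
      rw [Nat.sub_zero, catSeq_lt (by simp)]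
      simp
    rw [h2, h3, ih]
    simp

lemma sig_proj (m : ℕ) (i : Bool) (x : ℕ → Bool) :
    piProj 0 0 (catSeq (sig m i) x) (m + 1) = pathEnd m 1 ++ [cond i 1 0] := by
  have h := proj_catSeq (sig m i) x
  rw [sig_len] at h
  rw [h]
  cases m <;> simp [sig, pathEnd]


lemma adjB (m : ℕ) (i : Bool) (x : ℕ → Bool) :
    LcAdj c (0, 0, catSeq (sig m i) x) (m + 1, cond i (c m) 0, x) := by
  apply mkLcAdj
  · show LAdj c (max 0 (m+1)) _ _
    rw [Nat.max_eq_right (Nat.zero_le _)]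
    have h1 : piProj (m+1) (cond i (c m) 0) x (m+1) = [cond i (c m) 0] := piProj_self _ _ _
    rw [sig_proj, h1]
    cases i
    · left
      show _ ∈ _ ∪ _ ∪ _
      exact Or.inl (Or.inr (Or.inl rfl))
    · right
      show _ ∈ _ ∪ _ ∪ _
      exact Or.inl (Or.inr (Or.inr rfl))
  · intro j
    show catSeq (sig m i) x (max 0 (m+1) - 0 + j) = x (max 0 (m+1) - (m+1) + j)
    rw [Nat.max_eq_right (Nat.zero_le _), Nat.sub_zero, Nat.sub_self, Nat.zero_add,
      catSeq_ge (by rw [sig_len]; omega), sig_len]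
    congr 1
    omega

lemma memXc0 (y : ℕ → Bool) : ((0, 0, y) : ℕ × ℕ × (ℕ → Bool)) ∈ Xc c :=
  Or.inl ⟨rfl, rfl⟩

lemma memXcS {m k : ℕ} (h : k ≤ c m) (x : ℕ → Bool) :
    ((m + 1, k, x) : ℕ × ℕ × (ℕ → Bool)) ∈ Xc c :=
  Or.inr ⟨Nat.le_add_left 1 m, by simpa using h⟩

def Conn (c : ℕ → ℕ) : (ℕ × ℕ × (ℕ → Bool)) → (ℕ × ℕ × (ℕ → Bool)) → Prop :=
  Relation.ReflTransGen (fun a b => a ∈ Xc c ∧ b ∈ Xc c ∧ LcAdj c a b)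

lemma LcAdj_symm {p q : ℕ × ℕ × (ℕ → Bool)} (h : LcAdj c p q) : LcAdj c q p :=
  fun n hn => (h n (by rw [max_comm] at hn; exact hn)).symm

lemma Conn.symm {p q : ℕ × ℕ × (ℕ → Bool)} (h : Conn c p q) : Conn c q p :=
  (@Relation.ReflTransGen.stdSymm _ _ ⟨fun _ _ hr => ⟨hr.2.1, hr.1, LcAdj_symm hr.2.2⟩⟩).symm _ _ h

lemma connLadder (m : ℕ) (x : ℕ → Bool) : ∀ k, k ≤ c m → Conn c (m + 1, 0, x) (m + 1, k, x)
  | 0, _ => Relation.ReflTransGen.refl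
  | k + 1, h =>
    Relation.ReflTransGen.tail (connLadder m x k (by omega))
      ⟨memXcS (by omega) x, memXcS h x, adjA (by omega) x⟩

lemma connFlip (m : ℕ) (i i' : Bool) (x : ℕ → Bool) :
    Conn c (0, 0, catSeq (sig m i) x) (0, 0, catSeq (sig m i') x) := by
  have key : ∀ j : Bool, Conn c (0, 0, catSeq (sig m j) x) (m + 1, cond j (c m) 0, x) :=
    fun j => Relation.ReflTransGen.single
      ⟨memXc0 _, memXcS (by cases j <;> simp) x, adjB m j x⟩
  have lad : ∀ j : Bool, Conn c (m + 1, 0, x) (m + 1, cond j (c m) 0, x) := by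
    intro j
    cases j
    · exact Relation.ReflTransGen.refl
    · exact connLadder m x _ le_rfl
  exact ((key i).trans (lad i).symm).trans ((lad i').trans (key i').symm)


lemma sig_cat_last (a : ℕ) (b : Bool) (w : ℕ → Bool) : catSeq (sig a b) w a = b := by
  rw [catSeq_lt (by rw [sig_len]; omega)]
  simp only [List.get_eq_getElem]
  cases a with
  | zero => simp [sig]
  | succ t =>
    show (List.replicate t false ++ [true, b])[t + 1] = b
    rw [List.getElem_append_right (by simp)]
    simp

lemma sig_cat_tail (a : ℕ) (b : Bool) (w : ℕ → Bool) (j : ℕ) :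
    catSeq (sig a b) w (a + 1 + j) = w j := by
  rw [catSeq_ge (by rw [sig_len]; omega), sig_len]
  congr 1
  omega

lemma connTail (a : ℕ) : ∀ y y' : ℕ → Bool, (∀ j, y (a + j) = y' (a + j)) →
    Conn c (0, 0, y) (0, 0, y') := by
  induction a with
  | zero =>
    intro y y' h
    have : y = y' := funext fun j => by simpa using h j
    rw [this]
    exact Relation.ReflTransGen.refl
  | succ a ih =>
    intro y y' h
    set w : ℕ → Bool := fun j => y (a + 1 + j) with hw
    have h1 : ∀ j, y (a + j) = catSeq (sig a (y a)) w (a + j) := by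
      intro j
      cases j with
      | zero => rw [Nat.add_zero, sig_cat_last]
      | succ j =>
        rw [show a + (j + 1) = a + 1 + j by omega, sig_cat_tail]
    have h2 : ∀ j, y' (a + j) = catSeq (sig a (y' a)) w (a + j) := by
      intro j
      cases j with
      | zero => rw [Nat.add_zero, sig_cat_last]
      | succ j =>
        rw [show a + (j + 1) = a + 1 + j by omega, sig_cat_tail, hw]
        exact (h j).symm
    exact ((ih y _ h1).trans (connFlip a (y a) (y' a) w)).trans (ih y' _ h2).symm

lemma connDown (p : ℕ × ℕ × (ℕ → Bool)) (hp : p ∈ Xc c) :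
    ∃ t : List Bool, t.length = p.1 ∧ Conn c p (0, 0, catSeq t p.2.2) := by
  obtain ⟨n, k, x⟩ := p
  cases n with
  | zero =>
    obtain rfl : k = 0 := by
      rcases hp with ⟨_, h⟩ | ⟨h, _⟩
      · exact h
      · omega
    exact ⟨[], rfl, by rw [catSeq_nil]; exact Relation.ReflTransGen.refl⟩
  | succ m =>
    have hk : k ≤ c m := by
      rcases hp with ⟨h, _⟩ | ⟨_, h⟩
      · omega
      · simpa using h
    refine ⟨sig m false, sig_len m false, ?_⟩
    have step : Conn c (0, 0, catSeq (sig m false) x) (m + 1, 0, x) :=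
      Relation.ReflTransGen.single ⟨memXc0 _, memXcS (Nat.zero_le _) x, adjB m false x⟩
    exact Conn.symm (Relation.ReflTransGen.trans step (connLadder m x k hk))


lemma lastEdges {n : ℕ} {u v : List ℕ} (h : (u, v) ∈ LEdges c n)
    (hu : 2 ≤ u.length) (hv : 2 ≤ v.length) : u.getLast? = v.getLast? := by
  cases n with
  | zero => exact absurd h (by simp [LEdges])
  | succ n =>
    rcases h with (⟨u', v', _, i, _, he⟩ | h2) | ⟨j, _, he⟩
    · rw [Prod.ext_iff] at he
      obtain ⟨h1, h2⟩ := he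
      simp only at h1 h2
      subst h1; subst h2
      rw [List.getLast?_concat, List.getLast?_concat]
    · rcases h2 with he | he
      · have : v = [0] := congrArg Prod.snd he
        rw [this] at hv; simp at hv
      · have : u = [c n] := congrArg Prod.fst he
        rw [this] at hu; simp at hu
    · have : u = [j] := congrArg Prod.fst he
      rw [this] at hu; simp at hu

lemma lastProj {m n : ℕ} (h : m < n) (k : ℕ) (x : ℕ → Bool) :
    (piProj m k x n).getLast? = some (cond (x (n - m - 1)) 1 0) := by
  obtain ⟨n, rfl⟩ : ∃ n', n = n' + 1 := ⟨n - 1, by omega⟩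
  rw [projStep (by omega), List.getLast?_concat, show n + 1 - m - 1 = n - m by omega]

lemma adjE {p q : ℕ × ℕ × (ℕ → Bool)} (h : LcAdj c p q) :
    ∃ a b : ℕ, (a : ℤ) - b = (q.1 : ℤ) - p.1 ∧ ∀ j, p.2.2 (a + j) = q.2.2 (b + j) := by
  set N := max p.1 q.1 with hN
  have hp : p.1 ≤ N := le_max_left _ _
  have hq : q.1 ≤ N := le_max_right _ _
  refine ⟨N - p.1, N - q.1, by omega, ?_⟩
  intro j
  have hadj := h (N + 1 + j) (by omega)
  have len1 : 2 ≤ (piProj p.1 p.2.1 p.2.2 (N + 1 + j)).length := by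
    rw [piProj_len]; omega
  have len2 : 2 ≤ (piProj q.1 q.2.1 q.2.2 (N + 1 + j)).length := by
    rw [piProj_len]; omega
  have heq : (piProj p.1 p.2.1 p.2.2 (N + 1 + j)).getLast?
      = (piProj q.1 q.2.1 q.2.2 (N + 1 + j)).getLast? := by
    rcases hadj with h' | h'
    · exact lastEdges h' len1 len2
    · exact (lastEdges h' len2 len1).symm
  rw [lastProj (by omega), lastProj (by omega),
    show N + 1 + j - p.1 - 1 = N - p.1 + j by omega,
    show N + 1 + j - q.1 - 1 = N - q.1 + j by omega] at heq
  have := Option.some.inj heq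
  cases hb : p.2.2 (N - p.1 + j) <;> cases hb' : q.2.2 (N - q.1 + j) <;>
    rw [hb, hb'] at this <;> simp_all

lemma Etrans {p q r : ℕ × ℕ × (ℕ → Bool)}
    (h1 : ∃ a b : ℕ, (a : ℤ) - b = (q.1 : ℤ) - p.1 ∧ ∀ j, p.2.2 (a + j) = q.2.2 (b + j))
    (h2 : ∃ a b : ℕ, (a : ℤ) - b = (r.1 : ℤ) - q.1 ∧ ∀ j, q.2.2 (a + j) = r.2.2 (b + j)) :
    ∃ a b : ℕ, (a : ℤ) - b = (r.1 : ℤ) - p.1 ∧ ∀ j, p.2.2 (a + j) = r.2.2 (b + j) := by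
  obtain ⟨a, b, hab, hf⟩ := h1
  obtain ⟨a', b', hab', hg⟩ := h2
  obtain ⟨d, hd1, hd2⟩ : ∃ d, b ≤ d ∧ a' ≤ d := ⟨max b a', le_max_left _ _, le_max_right _ _⟩
  refine ⟨a + (d - b), b' + (d - a'), by omega, ?_⟩
  intro j
  have e1 := hf (d - b + j)
  have e2 := hg (d - a' + j)
  rw [show a + (d - b) + j = a + (d - b + j) by omega, e1,
    show b + (d - b + j) = a' + (d - a' + j) by omega, e2]
  exact congrArg r.2.2 (by omega)


lemma EtoT {p q : ℕ × ℕ × (ℕ → Bool)}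
    (h : ∃ a b : ℕ, (a : ℤ) - b = (q.1 : ℤ) - p.1 ∧ ∀ j, p.2.2 (a + j) = q.2.2 (b + j)) :
    ∃ (t0 t1 : List Bool) (x : ℕ → Bool),
      (t0.length : ℤ) - (t1.length : ℤ) = (q.1 : ℤ) - (p.1 : ℤ) ∧
      p.2.2 = catSeq t0 x ∧ q.2.2 = catSeq t1 x := by
  obtain ⟨a, b, hab, hf⟩ := h
  refine ⟨List.ofFn (fun j : Fin a => p.2.2 j), List.ofFn (fun j : Fin b => q.2.2 j),
    fun j => p.2.2 (a + j), by simpa using hab, ?_, ?_⟩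
  · funext j
    by_cases hj : j < a
    · rw [catSeq_lt (by simpa using hj)]
      simp
    · rw [catSeq_ge (by simpa using not_lt.mp hj), List.length_ofFn]
      exact congrArg p.2.2 (by omega)
  · funext j
    by_cases hj : j < b
    · rw [catSeq_lt (by simpa using hj)]
      simp
    · rw [catSeq_ge (by simpa using not_lt.mp hj), List.length_ofFn]
      have := hf (j - b)
      rw [show b + (j - b) = j by omega] at this
      exact this.symm

lemma TtoE {p q : ℕ × ℕ × (ℕ → Bool)}
    (h : ∃ (t0 t1 : List Bool) (x : ℕ → Bool),
      (t0.length : ℤ) - (t1.length : ℤ) = (q.1 : ℤ) - (p.1 : ℤ) ∧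
      p.2.2 = catSeq t0 x ∧ q.2.2 = catSeq t1 x) :
    ∃ a b : ℕ, (a : ℤ) - b = (q.1 : ℤ) - p.1 ∧ ∀ j, p.2.2 (a + j) = q.2.2 (b + j) := by
  obtain ⟨t0, t1, x, hlen, hp2, hq2⟩ := h
  refine ⟨t0.length, t1.length, hlen, fun j => ?_⟩
  rw [hp2, hq2, catSeq_ge (by omega), catSeq_ge (by omega)]
  exact congrArg x (by omega)

lemma mainFwd {p q : ℕ × ℕ × (ℕ → Bool)}
    (h : Relation.ReflTransGen (fun a b => a ∈ Xc c ∧ b ∈ Xc c ∧ LcAdj c a b) p q) :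
    ∃ a b : ℕ, (a : ℤ) - b = (q.1 : ℤ) - p.1 ∧ ∀ j, p.2.2 (a + j) = q.2.2 (b + j) := by
  induction h with
  | refl => exact ⟨0, 0, by simp, fun j => rfl⟩
  | tail _ h2 ih => exact Etrans ih (adjE h2.2.2)

lemma mainBwd {p q : ℕ × ℕ × (ℕ → Bool)} (hp : p ∈ Xc c) (hq : q ∈ Xc c)
    (h : ∃ (t0 t1 : List Bool) (x : ℕ → Bool),
      (t0.length : ℤ) - (t1.length : ℤ) = (q.1 : ℤ) - (p.1 : ℤ) ∧
      p.2.2 = catSeq t0 x ∧ q.2.2 = catSeq t1 x) :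
    Conn c p q := by
  obtain ⟨t0, t1, x, hlen, hp2, hq2⟩ := h
  obtain ⟨s0, hs0, cp⟩ := connDown p hp
  obtain ⟨s1, hs1, cq⟩ := connDown q hq
  have ha : p.1 + t0.length = q.1 + t1.length := by omega
  set a := p.1 + t0.length with haa
  have hy : ∀ j, catSeq s0 p.2.2 (a + j) = catSeq s1 q.2.2 (a + j) := by
    intro j
    have L : catSeq s0 p.2.2 (a + j) = x j := by
      rw [hp2, catSeq_ge (show s0.length ≤ a + j by omega),
        catSeq_ge (show t0.length ≤ a + j - s0.length by omega)]
      exact congrArg x (by omega)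
    have R : catSeq s1 q.2.2 (a + j) = x j := by
      rw [hq2, catSeq_ge (show s1.length ≤ a + j by omega),
        catSeq_ge (show t1.length ≤ a + j - s1.length by omega)]
      exact congrArg x (by omega)
    rw [L, R]
  exact (cp.trans (connTail a _ _ hy)).trans cq.symm

end Stmt13

/-- Two vertices `(n_0,k_0,x_0)` and `(n_1,k_1,x_1)` of `X_c` are in the same
connected component of `𝕃_c` iff there are finite binary strings `t_0, t_1`
and `x ∈ 2^ℕ` with `|t_0| - |t_1| = n_1 - n_0` and `x_i = t_i^⌢x`. -/
theorem stmt13 (c : ℕ → ℕ) (p q : ℕ × ℕ × (ℕ → Bool))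
    (hp : p ∈ Xc c) (hq : q ∈ Xc c) :
    Relation.ReflTransGen
        (fun a b => a ∈ Xc c ∧ b ∈ Xc c ∧ LcAdj c a b) p q ↔
      ∃ (t0 t1 : List Bool) (x : ℕ → Bool),
        (t0.length : ℤ) - (t1.length : ℤ) = (q.1 : ℤ) - (p.1 : ℤ) ∧
        p.2.2 = catSeq t0 x ∧ q.2.2 = catSeq t1 x :=
  ⟨fun h => Stmt13.EtoT (Stmt13.mainFwd h), fun h => Stmt13.mainBwd hp hq h⟩
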